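/- Intermediate-frequency contraction for Taylor transmission conditions without overlap (Theorem 3.3, middle case): for every Fourier frequency k with ω/Cp < k < ω/Cs (so λ₁ = i√(ω²/Cs² − k²) is purely imaginary with positive imaginary part and λ₂ = √(k² − ω²/Cp²) > 0 is real), both roots of the quadratic Q₀(z) = z² − (X₀² + 2Y₀)z + Y₀² have modulus strictly less than 1; hence the non-overlapping Schwarz method with zeroth-order Taylor transmission conditions converges on these frequencies. -/

import Mathlib

noncomputable section

open Complex

/-- `λ₁ = √(k² − ω²/Cs²)`, principal branch of the complex square root. -/
def lam1 (ω Cs k : ℝ) : ℂ := ((k ^ 2 - ω ^ 2 / Cs ^ 2 : ℝ) : ℂ) ^ ((1 : ℂ) / 2)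

/-- `λ₂ = √(k² − ω²/Cp²)`, principal branch of the complex square root. -/
def lam2 (ω Cp k : ℝ) : ℂ := ((k ^ 2 - ω ^ 2 / Cp ^ 2 : ℝ) : ℂ) ^ ((1 : ℂ) / 2)

/-- `Z₁ = Cs³(k² + λ₁²)² + ω²Cp·k²`. -/
def Z1 (ω Cs Cp k : ℝ) : ℂ :=
  (Cs : ℂ) ^ 3 * ((k : ℂ) ^ 2 + (lam1 ω Cs k) ^ 2) ^ 2 + (ω : ℂ) ^ 2 * (Cp : ℂ) * (k : ℂ) ^ 2

/-- `Z₂ = (4Cs³k² + Cpω²)λ₁λ₂`. -/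
def Z2 (ω Cs Cp k : ℝ) : ℂ :=
  (4 * (Cs : ℂ) ^ 3 * (k : ℂ) ^ 2 + (Cp : ℂ) * (ω : ℂ) ^ 2) * lam1 ω Cs k * lam2 ω Cp k

/-- `K = 2k(Cpω² + 2Cs³(k² + λ₁²))`. -/
def Kq (ω Cs Cp k : ℝ) : ℂ :=
  2 * (k : ℂ) * ((Cp : ℂ) * (ω : ℂ) ^ 2 + 2 * (Cs : ℂ) ^ 3 * ((k : ℂ) ^ 2 + (lam1 ω Cs k) ^ 2))

/-- `D = −Z₁ + Z₂ + iω³(λ₁ + λ₂Cp/Cs)`. -/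
def Dq (ω Cs Cp k : ℝ) : ℂ :=
  -Z1 ω Cs Cp k + Z2 ω Cs Cp k +
    Complex.I * (ω : ℂ) ^ 3 * (lam1 ω Cs k + lam2 ω Cp k * (Cp : ℂ) / (Cs : ℂ))

/-- `b₁₁ = (−Z₁ − Z₂ − iω³(λ₁ − λ₂Cp/Cs))/D`. -/
def b11 (ω Cs Cp k : ℝ) : ℂ :=
  (-Z1 ω Cs Cp k - Z2 ω Cs Cp k -
    Complex.I * (ω : ℂ) ^ 3 * (lam1 ω Cs k - lam2 ω Cp k * (Cp : ℂ) / (Cs : ℂ))) / Dq ω Cs Cp k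

/-- `b₁₂ = iλ₂K/D`. -/
def b12 (ω Cs Cp k : ℝ) : ℂ :=
  Complex.I * lam2 ω Cp k * Kq ω Cs Cp k / Dq ω Cs Cp k

/-- `b₂₁ = −iλ₁K/D`. -/
def b21 (ω Cs Cp k : ℝ) : ℂ :=
  -Complex.I * lam1 ω Cs k * Kq ω Cs Cp k / Dq ω Cs Cp k

/-- `b₂₂ = (−Z₁ − Z₂ + iω³(λ₁ − λ₂Cp/Cs))/D`. -/
def b22 (ω Cs Cp k : ℝ) : ℂ :=
  (-Z1 ω Cs Cp k - Z2 ω Cs Cp k +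
    Complex.I * (ω : ℂ) ^ 3 * (lam1 ω Cs k - lam2 ω Cp k * (Cp : ℂ) / (Cs : ℂ))) / Dq ω Cs Cp k

/-- `X_δ = e^{−λ₁δ}b₁₁ − e^{−λ₂δ}b₂₂`. -/
def Xd (ω Cs Cp k δ : ℝ) : ℂ :=
  Complex.exp (-(lam1 ω Cs k) * (δ : ℂ)) * b11 ω Cs Cp k -
    Complex.exp (-(lam2 ω Cp k) * (δ : ℂ)) * b22 ω Cs Cp k

/-- `Y_δ = e^{−(λ₁+λ₂)δ}(b₁₁b₂₂ − b₁₂b₂₁)`. -/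
def Yd (ω Cs Cp k δ : ℝ) : ℂ :=
  Complex.exp (-(lam1 ω Cs k + lam2 ω Cp k) * (δ : ℂ)) *
    (b11 ω Cs Cp k * b22 ω Cs Cp k - b12 ω Cs Cp k * b21 ω Cs Cp k)

/-- The quadratic `Q_δ(z) = z² − (X_δ² + 2Y_δ)z + Y_δ²` whose roots are the eigenvalues `r±`
of the double-iteration operator of the Schwarz method with zeroth-order Taylor
transmission conditions. -/
def Qd (ω Cs Cp k δ : ℝ) (z : ℂ) : ℂ :=
  z ^ 2 - ((Xd ω Cs Cp k δ) ^ 2 + 2 * Yd ω Cs Cp k δ) * z + (Yd ω Cs Cp k δ) ^ 2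

/-- Auxiliary: principal square root of a nonnegative real, as a complex power. -/
lemma cpow_half_of_nonneg (x : ℝ) (hx : 0 ≤ x) :
    ((x : ℝ) : ℂ) ^ ((1 : ℂ) / 2) = (Real.sqrt x : ℂ) := by
  rw [show ((1:ℂ)/2) = ((1/2 : ℝ) : ℂ) by norm_num, ← Complex.ofReal_cpow hx,
    ← Real.sqrt_eq_rpow]

/-- Auxiliary: principal square root of a negative real, as a complex power. -/
lemma cpow_half_of_neg (x : ℝ) (hx : x < 0) :
    ((x : ℝ) : ℂ) ^ ((1 : ℂ) / 2) = Complex.I * (Real.sqrt (-x) : ℂ) := by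
  rw [Complex.ofReal_cpow_of_nonpos hx.le,
    show ((-(x:ℝ)):ℂ) = ((-x : ℝ):ℂ) by push_cast; ring,
    cpow_half_of_nonneg _ (by linarith)]
  have h : Complex.exp (↑Real.pi * Complex.I * (1/2)) = Complex.I := by
    rw [show (↑Real.pi * Complex.I * (1/2) : ℂ) = (↑(Real.pi/2) : ℝ) * Complex.I by
      push_cast; ring, Complex.exp_mul_I]
    simp
  rw [h]; ring

/-- Auxiliary: the key strict inequality for the intermediate frequency regime. -/
lemma key_ineq (ω Cs Cp k a b : ℝ)
    (hω : 0 < ω) (hCs : 0 < Cs) (hCp : 0 < Cp) (hCsCp : Cs < Cp) (hk : 0 < k)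
    (ha : 0 < a) (hb : 0 < b)
    (ha2 : a ^ 2 = ω ^ 2 / Cs ^ 2 - k ^ 2) (hlt2 : ω ^ 2 / Cp ^ 2 < k ^ 2) :
    (ω ^ 3 * a) * (ω ^ 3 * b * Cp / Cs) <
      (Cs ^ 3 * (k ^ 2 - a ^ 2) ^ 2 + ω ^ 2 * Cp * k ^ 2) *
      ((4 * Cs ^ 3 * k ^ 2 + Cp * ω ^ 2) * (a * b)) := by
  have hcubic : 2 * Cp ^ 2 * Cs < Cp ^ 3 + 4 * Cs ^ 3 := by
    nlinarith [sq_nonneg (Cp - 2 * Cs), sq_nonneg (Cp - Cs), mul_pos hCs hCp, sq_nonneg (Cp + Cs)]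
  have h4 : ω ^ 2 < k ^ 2 * Cp ^ 2 := by
    rw [div_lt_iff₀ (by positivity)] at hlt2; linarith
  have hKin : 0 < Cp * ω ^ 2 + 2 * Cs ^ 3 * (k ^ 2 - a ^ 2) := by
    have hsub : k ^ 2 - a ^ 2 = 2 * k ^ 2 - ω ^ 2 / Cs ^ 2 := by rw [ha2]; ring
    have hexp : 2 * Cs ^ 3 * (2 * k ^ 2 - ω ^ 2 / Cs ^ 2) = 4 * Cs ^ 3 * k ^ 2 - 2 * Cs * ω ^ 2 := by
      field_simp; ring
    have key : 0 < Cp ^ 2 * (Cp * ω ^ 2 + 4 * Cs ^ 3 * k ^ 2 - 2 * Cs * ω ^ 2) := by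
      nlinarith [mul_lt_mul_of_pos_left h4 (by positivity : (0:ℝ) < 4 * Cs ^ 3),
        mul_pos (mul_pos hω hω) (sub_pos.mpr hcubic)]
    have hT : 0 < Cp * ω ^ 2 + 4 * Cs ^ 3 * k ^ 2 - 2 * Cs * ω ^ 2 := by
      nlinarith [key, mul_pos hCp hCp]
    rw [hsub, hexp]; linarith
  have hKid : a * b * (2 * k * (Cp * ω ^ 2 + 2 * Cs ^ 3 * (k ^ 2 - a ^ 2))) ^ 2 =
      4 * ((Cs ^ 3 * (k ^ 2 - a ^ 2) ^ 2 + ω ^ 2 * Cp * k ^ 2) *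
           ((4 * Cs ^ 3 * k ^ 2 + Cp * ω ^ 2) * (a * b)) -
           (ω ^ 3 * a) * (ω ^ 3 * b * Cp / Cs)) := by
    have hCs0 : Cs ≠ 0 := ne_of_gt hCs
    have ha2' : Cs ^ 2 * (a ^ 2 + k ^ 2) = ω ^ 2 := by
      field_simp at ha2; linarith
    field_simp
    linear_combination (-4 * Cp * ω ^ 2 * (Cs ^ 2 * (k ^ 2 + a ^ 2) + ω ^ 2)) * ha2'
  have hKpos : 0 < a * b * (2 * k * (Cp * ω ^ 2 + 2 * Cs ^ 3 * (k ^ 2 - a ^ 2))) ^ 2 :=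
    mul_pos (mul_pos ha hb) (pow_pos (mul_pos (by linarith) hKin) 2)
  linarith [hKid, hKpos]

/-- Auxiliary: the identity `λ₁λ₂K² = 4(Z₁S − AC)` at the level of complex numerators. -/
lemma prod_helper (rZ rS rA rC a b rK : ℝ) (hKid : a * b * rK ^ 2 = 4 * (rZ * rS - rA * rC)) :
    (Complex.ofReal (rA - rZ) + Complex.ofReal (rC - rS) * Complex.I) *
      (Complex.ofReal (-(rZ + rA)) + Complex.ofReal (-(rS + rC)) * Complex.I) -
      (Complex.ofReal (b * rK) * Complex.I) * Complex.ofReal (a * rK) =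
    (Complex.ofReal (-(rZ - rA)) + Complex.ofReal (rS - rC) * Complex.I) *
      (Complex.ofReal (-(rZ + rA)) + Complex.ofReal (rS + rC) * Complex.I) := by
  rw [Complex.ext_iff]
  constructor <;> simp [Complex.mul_re, Complex.mul_im] <;>
    [ring; linear_combination -hKid]

/-- Auxiliary: both roots of the quadratic `D s² − (XD)s − (YD)` lie in the open unit disc,
given that the coefficient data comes from positive reals with `rA·rC < rZ·rS`. -/
lemma disk_lemma (rZ rS rA rC : ℝ) (hrZ : 0 < rZ) (hrS : 0 < rS) (hrA : 0 < rA) (hrC : 0 < rC)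
    (hkey : rA * rC < rZ * rS) (s : ℂ)
    (hseq : (Complex.ofReal (-(rZ + rA)) + Complex.ofReal (rS + rC) * Complex.I) * s ^ 2 =
      (Complex.ofReal (2 * rA) + Complex.ofReal (2 * rC) * Complex.I) * s +
      (Complex.ofReal (-(rZ - rA)) + Complex.ofReal (rS - rC) * Complex.I)) :
    ‖s‖ < 1 := by
  by_contra habs
  push_neg at habs
  have hs1 : s + 1 ≠ 0 := by
    intro h0
    have hsm : s = -1 := by linear_combination h0
    rw [hsm] at hseq
    have him := congrArg Complex.im hseq
    simp [Complex.mul_im, Complex.mul_re] at him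
    nlinarith [him]
  set t : ℂ := (s - 1) / (s + 1) with ht_def
  have hteq' : -4 * Complex.I * (rC:ℂ) * (s - 1) ^ 2 +
      4 * ((rZ:ℂ) - (rS:ℂ) * Complex.I) * ((s - 1) * (s + 1)) + 4 * (rA:ℂ) * (s + 1) ^ 2 = 0 := by
    have e1 : (Complex.ofReal (-(rZ + rA)) : ℂ) = -(rZ:ℂ) - (rA:ℂ) := by push_cast; ring
    have e2 : (Complex.ofReal (rS + rC) : ℂ) = (rS:ℂ) + (rC:ℂ) := by push_cast; ring
    have e3 : (Complex.ofReal (2 * rA) : ℂ) = 2 * (rA:ℂ) := by push_cast; ring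
    have e4 : (Complex.ofReal (2 * rC) : ℂ) = 2 * (rC:ℂ) := by push_cast; ring
    have e5 : (Complex.ofReal (-(rZ - rA)) : ℂ) = -(rZ:ℂ) + (rA:ℂ) := by push_cast; ring
    have e6 : (Complex.ofReal (rS - rC) : ℂ) = (rS:ℂ) - (rC:ℂ) := by push_cast; ring
    rw [e1, e2, e3, e4, e5, e6] at hseq
    linear_combination (-4 : ℂ) * hseq
  have ht1 : t * (s + 1) = s - 1 := div_mul_cancel₀ _ hs1
  have h5 : (s + 1) ^ 2 * (-(rC:ℂ) * Complex.I * t ^ 2 + ((rZ:ℂ) - (rS:ℂ) * Complex.I) * t + (rA:ℂ)) = 0 := by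
    linear_combination (1/4 : ℂ) * hteq' +
      (-(rC:ℂ) * Complex.I * (t * (s + 1) + (s - 1)) + ((rZ:ℂ) - (rS:ℂ) * Complex.I) * (s + 1)) * ht1
  have hteq : -(rC:ℂ) * Complex.I * t ^ 2 + ((rZ:ℂ) - (rS:ℂ) * Complex.I) * t + (rA:ℂ) = 0 :=
    (mul_eq_zero.mp h5).resolve_left (pow_ne_zero 2 hs1)
  set x : ℝ := t.re with hx_def
  set y : ℝ := t.im with hy_def
  have htxy : t = (x:ℂ) + (y:ℂ) * Complex.I := (Complex.re_add_im t).symm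
  rw [htxy] at hteq
  have hre : 2 * rC * x * y + rZ * x + rS * y + rA = 0 := by
    have h := congrArg Complex.re hteq
    simp [Complex.mul_re, Complex.mul_im, pow_succ, Complex.add_re, Complex.add_im] at h
    linarith [h]
  have him : -rC * (x ^ 2 - y ^ 2) + rZ * y - rS * x = 0 := by
    have h := congrArg Complex.im hteq
    simp [Complex.mul_re, Complex.mul_im, pow_succ, Complex.add_re, Complex.add_im] at h
    linarith [h]
  have hx0 : 0 ≤ x := by
    have hns : 1 ≤ Complex.normSq s := by
      have h1 := Complex.sq_norm s
      nlinarith [habs, norm_nonneg s]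
    have hid : x * Complex.normSq (s + 1) = Complex.normSq s - 1 := by
      have h1 : (s - 1) * (starRingEnd ℂ) (s + 1) = t * ((s + 1) * (starRingEnd ℂ) (s + 1)) := by
        rw [ht_def]
        field_simp
      rw [Complex.mul_conj] at h1
      have h2 := congrArg Complex.re h1
      simp [Complex.mul_re, Complex.normSq_apply, Complex.sub_re, Complex.sub_im,
        Complex.add_re, Complex.add_im] at h2
      simp [Complex.normSq_apply, Complex.add_re, Complex.add_im]
      nlinarith [h2]
    nlinarith [Complex.normSq_pos.mpr hs1, hid, hns]
  have hy' : y * (2 * rC * x + rS) + (rZ * x + rA) = 0 := by linear_combination hre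
  have hT : x * (rC * x + rS) * (2 * rC * x + rS) ^ 2 +
      (rZ * x + rA) * (rC * rZ * x + (rZ * rS - rA * rC)) = 0 := by
    linear_combination (-(2 * rC * x + rS) ^ 2) * him +
      (rC * (y * (2 * rC * x + rS) - (rZ * x + rA)) + rZ * (2 * rC * x + rS)) * hy'
  have hpos1 : 0 < (rZ * x + rA) * (rC * rZ * x + (rZ * rS - rA * rC)) := by
    have e1 : 0 < rZ * x + rA := by nlinarith
    have e2 : 0 < rC * rZ * x + (rZ * rS - rA * rC) := by
      nlinarith [mul_nonneg (mul_pos hrC hrZ).le hx0]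
    exact mul_pos e1 e2
  have hpos2 : 0 ≤ x * (rC * x + rS) * (2 * rC * x + rS) ^ 2 := by
    have h1 : 0 ≤ x * (rC * x + rS) := mul_nonneg hx0 (by nlinarith)
    positivity
  linarith [hT, hpos1, hpos2]

set_option maxHeartbeats 3000000 in
/-- **Theorem 3.3, middle case**: for `ω/Cp < k < ω/Cs`, both roots of
`Q₀(z) = z² − (X₀² + 2Y₀)z + Y₀²` have modulus strictly less than `1`; the non-overlapping
Schwarz method with zeroth-order Taylor transmission conditions converges on these
frequencies. -/
theorem taylor_nonoverlapping_intermediate_contraction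
    (ω Cs Cp k : ℝ)
    (hω : 0 < ω) (hCs : 0 < Cs) (hCsCp : Cs < Cp) (hCp2 : 2 * Cs ^ 2 < Cp ^ 2)
    (hk1 : ω / Cp < k) (hk2 : k < ω / Cs)
    (hD : Dq ω Cs Cp k ≠ 0) :
    ∀ z : ℂ, Qd ω Cs Cp k 0 z = 0 → ‖z‖ < 1 := by
  have hCp : 0 < Cp := lt_trans hCs hCsCp
  have hk : 0 < k := lt_trans (div_pos hω hCp) hk1
  have hlt1 : k ^ 2 < ω ^ 2 / Cs ^ 2 := by
    rw [lt_div_iff₀ (by positivity)]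
    have h2 : k * Cs < ω := (lt_div_iff₀ hCs).mp hk2
    nlinarith [mul_pos hk hCs]
  have hlt2 : ω ^ 2 / Cp ^ 2 < k ^ 2 := by
    rw [div_lt_iff₀ (by positivity)]
    have h2 : ω < k * Cp := (div_lt_iff₀ hCp).mp hk1
    nlinarith [hω.le]
  set a : ℝ := Real.sqrt (ω ^ 2 / Cs ^ 2 - k ^ 2) with ha_def
  set b : ℝ := Real.sqrt (k ^ 2 - ω ^ 2 / Cp ^ 2) with hb_def
  have ha : 0 < a := Real.sqrt_pos.mpr (by linarith)
  have hb : 0 < b := Real.sqrt_pos.mpr (by linarith)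
  have ha2 : a ^ 2 = ω ^ 2 / Cs ^ 2 - k ^ 2 := Real.sq_sqrt (by linarith)
  have hb2 : b ^ 2 = k ^ 2 - ω ^ 2 / Cp ^ 2 := Real.sq_sqrt (by linarith)
  have hl1 : lam1 ω Cs k = Complex.I * (a : ℂ) := by
    rw [lam1, cpow_half_of_neg _ (by linarith), neg_sub]
  have hl2 : lam2 ω Cp k = (b : ℂ) := by
    rw [lam2, cpow_half_of_nonneg _ (by linarith)]
  set rZ : ℝ := Cs ^ 3 * (k ^ 2 - a ^ 2) ^ 2 + ω ^ 2 * Cp * k ^ 2 with hrZ_def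
  set rS : ℝ := (4 * Cs ^ 3 * k ^ 2 + Cp * ω ^ 2) * (a * b) with hrS_def
  set rA : ℝ := ω ^ 3 * a with hrA_def
  set rC : ℝ := ω ^ 3 * b * Cp / Cs with hrC_def
  set rK : ℝ := 2 * k * (Cp * ω ^ 2 + 2 * Cs ^ 3 * (k ^ 2 - a ^ 2)) with hrK_def
  have hrZ : 0 < rZ := by
    rw [hrZ_def]
    have h1 := mul_nonneg (pow_pos hCs 3).le (sq_nonneg (k ^ 2 - a ^ 2))
    nlinarith [mul_pos (mul_pos (pow_pos hω 2) hCp) (pow_pos hk 2)]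
  have hrS : 0 < rS := by
    rw [hrS_def]
    have h1 : 0 < 4 * Cs ^ 3 * k ^ 2 + Cp * ω ^ 2 := by
      nlinarith [mul_pos (pow_pos hCs 3) (pow_pos hk 2), mul_pos hCp (pow_pos hω 2)]
    exact mul_pos h1 (mul_pos ha hb)
  have hrA : 0 < rA := mul_pos (pow_pos hω 3) ha
  have hrC : 0 < rC := div_pos (mul_pos (mul_pos (pow_pos hω 3) hb) hCp) hCs
  have hkey : rA * rC < rZ * rS := by
    rw [hrA_def, hrC_def, hrZ_def, hrS_def]
    exact key_ineq ω Cs Cp k a b hω hCs hCp hCsCp hk ha hb ha2 hlt2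
  have hKid : a * b * rK ^ 2 = 4 * (rZ * rS - rA * rC) := by
    rw [hrK_def, hrZ_def, hrS_def, hrA_def, hrC_def]
    have hCs0 : Cs ≠ 0 := ne_of_gt hCs
    have ha2' : Cs ^ 2 * (a ^ 2 + k ^ 2) = ω ^ 2 := by
      field_simp at ha2
      linarith [ha2]
    field_simp
    linear_combination (-4 * Cp * ω ^ 2 * (Cs ^ 2 * (k ^ 2 + a ^ 2) + ω ^ 2)) * ha2'
  have hdivCs : (b:ℂ) * (Cp:ℂ) / (Cs:ℂ) = ((b * Cp / Cs : ℝ) : ℂ) := by push_cast; ring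
  -- value of D
  have hD' : Dq ω Cs Cp k =
      Complex.ofReal (-(rZ + rA)) + Complex.ofReal (rS + rC) * Complex.I := by
    rw [Dq, Z1, Z2, hl1, hl2, hrZ_def, hrA_def, hrS_def, hrC_def, hdivCs, Complex.ext_iff]
    constructor <;>
      simp [Complex.mul_re, Complex.mul_im, pow_succ, Complex.add_re, Complex.add_im]
    all_goals (first | ring1 | tauto)
  -- value of X·D
  have hX : Xd ω Cs Cp k 0 * Dq ω Cs Cp k =
      Complex.ofReal (2 * rA) + Complex.ofReal (2 * rC) * Complex.I := by
    rw [Xd, b11, b22]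
    simp only [Complex.ofReal_zero, mul_zero, neg_zero, zero_mul, Complex.exp_zero, one_mul]
    rw [div_sub_div_same, div_mul_cancel₀ _ hD, hl1, hl2, hrA_def, hrC_def, hdivCs,
      Complex.ext_iff]
    constructor <;>
      simp [Complex.mul_re, Complex.mul_im, pow_succ, Complex.add_re, Complex.add_im]
    all_goals (first | ring1 | tauto)
  -- values of the bᵢⱼ·D
  have h12 : b12 ω Cs Cp k * Dq ω Cs Cp k = Complex.ofReal (b * rK) * Complex.I := by
    rw [b12, Kq, div_mul_cancel₀ _ hD, hl1, hl2, hrK_def, Complex.ext_iff]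
    constructor <;>
      simp [Complex.mul_re, Complex.mul_im, pow_succ, Complex.add_re, Complex.add_im]
    all_goals (first | ring1 | tauto)
  have h21 : b21 ω Cs Cp k * Dq ω Cs Cp k = Complex.ofReal (a * rK) := by
    rw [b21, Kq, div_mul_cancel₀ _ hD, hl1, hrK_def, Complex.ext_iff]
    constructor <;>
      simp [Complex.mul_re, Complex.mul_im, pow_succ, Complex.add_re, Complex.add_im]
    all_goals (first | ring1 | tauto)
  have h11 : b11 ω Cs Cp k * Dq ω Cs Cp k =
      Complex.ofReal (rA - rZ) + Complex.ofReal (rC - rS) * Complex.I := by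
    rw [b11, Z1, Z2, div_mul_cancel₀ _ hD, hl1, hl2, hrZ_def, hrA_def, hrS_def, hrC_def,
      hdivCs, Complex.ext_iff]
    constructor <;>
      simp [Complex.mul_re, Complex.mul_im, pow_succ, Complex.add_re, Complex.add_im]
    all_goals (first | ring1 | tauto)
  have h22 : b22 ω Cs Cp k * Dq ω Cs Cp k =
      Complex.ofReal (-(rZ + rA)) + Complex.ofReal (-(rS + rC)) * Complex.I := by
    rw [b22, Z1, Z2, div_mul_cancel₀ _ hD, hl1, hl2, hrZ_def, hrA_def, hrS_def, hrC_def,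
      hdivCs, Complex.ext_iff]
    constructor <;>
      simp [Complex.mul_re, Complex.mul_im, pow_succ, Complex.add_re, Complex.add_im]
    all_goals (first | ring1 | tauto)
  -- value of Y·D
  have hY : Yd ω Cs Cp k 0 * Dq ω Cs Cp k =
      Complex.ofReal (-(rZ - rA)) + Complex.ofReal (rS - rC) * Complex.I := by
    have hsq : Yd ω Cs Cp k 0 * Dq ω Cs Cp k * Dq ω Cs Cp k =
        (Complex.ofReal (-(rZ - rA)) + Complex.ofReal (rS - rC) * Complex.I) *
          Dq ω Cs Cp k := by
      have e1 : Yd ω Cs Cp k 0 * Dq ω Cs Cp k * Dq ω Cs Cp k =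
          (b11 ω Cs Cp k * Dq ω Cs Cp k) * (b22 ω Cs Cp k * Dq ω Cs Cp k) -
          (b12 ω Cs Cp k * Dq ω Cs Cp k) * (b21 ω Cs Cp k * Dq ω Cs Cp k) := by
        rw [Yd]
        simp only [Complex.ofReal_zero, mul_zero, neg_zero, Complex.exp_zero, one_mul]
        ring
      rw [e1, h11, h22, h12, h21, hD']
      exact prod_helper rZ rS rA rC a b rK hKid
    exact mul_right_cancel₀ hD hsq
  -- every root of s² − Xs − Y has modulus < 1
  have claim : ∀ s : ℂ,
      s ^ 2 - Xd ω Cs Cp k 0 * s - Yd ω Cs Cp k 0 = 0 → ‖s‖ < 1 := by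
    intro s hseq0
    refine disk_lemma rZ rS rA rC hrZ hrS hrA hrC hkey s ?_
    rw [← hD', ← hX, ← hY]
    linear_combination Dq ω Cs Cp k * hseq0
  intro z hz
  simp only [Qd] at hz
  obtain ⟨s, hs⟩ := IsAlgClosed.exists_pow_nat_eq (k := ℂ) z (n := 2) (by norm_num)
  rw [← hs] at hz
  have hfact : (s ^ 2 - Xd ω Cs Cp k 0 * s - Yd ω Cs Cp k 0) *
      (s ^ 2 + Xd ω Cs Cp k 0 * s - Yd ω Cs Cp k 0) = 0 := by
    linear_combination hz
  have habs : ‖s‖ < 1 := by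
    rcases mul_eq_zero.mp hfact with h | h
    · exact claim s h
    · have h' : (-s) ^ 2 - Xd ω Cs Cp k 0 * (-s) - Yd ω Cs Cp k 0 = 0 := by
        linear_combination h
      simpa using claim (-s) h'
  rw [← hs, norm_pow]
  exact pow_lt_one₀ (norm_nonneg s) habs two_ne_zero

end
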